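/- For a simple asymmetric random walk on ℤ (up-probability p, down-probability q=1−p, p≠q) started at 0, the probability that the maximum of the walk up to the first return time to 0 exceeds a positive integer x equals (q−p)/((q/p)^{x+1} − 1), and the probability of returning to 0 with maximum at most x equals p·((q/p)^{x+1} − (q/p))/((q/p)^{x+1} − 1) + min{p,q}. -/

import Mathlib

open Filter Topology Finset
open scoped Classical

/-- Position after `k` steps of a nearest-neighbor walk on ℤ started at `start`,
driven by the step sequence `s` (`true` = step `+1`, `false` = step `-1`). -/
def walkPos {n : ℕ} (start : ℤ) (s : Fin n → Bool) (k : ℕ) : ℤ :=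
  start + ∑ i ∈ Finset.univ.filter (fun i : Fin n => (i : ℕ) < k),
    (if s i then (1 : ℤ) else -1)

/-- Probability weight of a finite step sequence when each step is `+1` with
probability `p` and `-1` with probability `1 - p`, independently. -/
noncomputable def stepWeight (p : ℝ) {n : ℕ} (s : Fin n → Bool) : ℝ :=
  ∏ i, (if s i then p else 1 - p)

/-- Probability that the walk started at 0 exceeds level `x` (i.e. hits `x+1`)
within the first `n` steps, strictly before its first return to 0. -/
noncomputable def excursionExceedProb (p : ℝ) (x n : ℕ) : ℝ :=
  ∑ s : Fin n → Bool,
    if (∃ k ≤ n, 0 < k ∧ walkPos 0 s k = (x : ℤ) + 1 ∧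
          ∀ j, 0 < j → j < k → walkPos 0 s j ≠ 0) then
      stepWeight p s else 0

/-- Probability that the walk started at 0 makes its first return to 0 within
the first `n` steps, with maximal position at most `x` up to that return. -/
noncomputable def excursionReturnBelowProb (p : ℝ) (x n : ℕ) : ℝ :=
  ∑ s : Fin n → Bool,
    if (∃ k ≤ n, 0 < k ∧ walkPos 0 s k = 0 ∧
          (∀ j, 0 < j → j < k → walkPos 0 s j ≠ 0) ∧
          (∀ j ≤ k, walkPos 0 s j ≤ (x : ℤ))) then
      stepWeight p s else 0


-- Auxiliary development

lemma walkPos_eq_sum (z : ℤ) {n : ℕ} (s : Fin n → Bool) (k : ℕ) :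
    walkPos z s k = z + ∑ i : Fin n, if (i : ℕ) < k then (if s i then (1:ℤ) else -1) else 0 := by
  rw [walkPos, Finset.sum_filter]

@[simp] lemma walkPos_zero (z : ℤ) {n : ℕ} (s : Fin n → Bool) : walkPos z s 0 = z := by
  simp [walkPos_eq_sum]

lemma walkPos_cons (z : ℤ) {n : ℕ} (b : Bool) (s : Fin n → Bool) (k : ℕ) :
    walkPos z (Fin.cons b s) (k + 1) = walkPos (z + if b then 1 else -1) s k := by
  rw [walkPos_eq_sum, walkPos_eq_sum, Fin.sum_univ_succ]
  simp only [Fin.cons_zero, Fin.cons_succ, Fin.val_zero, Fin.val_succ]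
  rw [if_pos (Nat.succ_pos k)]
  have : ∀ i : Fin n, ((if (i:ℕ)+1 < k+1 then (if s i then (1:ℤ) else -1) else 0))
      = (if (i:ℕ) < k then (if s i then (1:ℤ) else -1) else 0) := by
    intro i; simp [Nat.succ_lt_succ_iff]
  rw [Finset.sum_congr rfl (fun i _ => this i)]
  ring

lemma walkPos_castSucc (z : ℤ) {n : ℕ} (s : Fin (n+1) → Bool) {k : ℕ} (hk : k ≤ n) :
    walkPos z s k = walkPos z (fun i : Fin n => s i.castSucc) k := by
  rw [walkPos_eq_sum, walkPos_eq_sum, Fin.sum_univ_castSucc]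
  have : ¬ ((Fin.last n : Fin (n+1)) : ℕ) < k := by simp [Fin.val_last]; omega
  rw [if_neg this, add_zero]
  simp [Fin.coe_castSucc]

lemma walkPos_succ_sub (z : ℤ) {n : ℕ} (s : Fin n → Bool) (k : ℕ) :
    walkPos z s (k+1) - walkPos z s k
      = ∑ i : Fin n, if (i:ℕ) = k then (if s i then (1:ℤ) else -1) else 0 := by
  rw [walkPos_eq_sum, walkPos_eq_sum]
  rw [add_sub_add_left_eq_sub, ← Finset.sum_sub_distrib]
  refine Finset.sum_congr rfl fun i _ => ?_
  by_cases hs : s i = true <;> simp only [hs, if_true, if_false, Bool.false_eq_true] <;>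
    split_ifs <;> omega

lemma walkPos_succ_le (z : ℤ) {n : ℕ} (s : Fin n → Bool) (k : ℕ) :
    walkPos z s (k+1) ≤ walkPos z s k + 1 ∧ walkPos z s k - 1 ≤ walkPos z s (k+1) := by
  have h := walkPos_succ_sub z s k
  have hb : walkPos z s (k+1) - walkPos z s k ≤ 1 ∧ (-1:ℤ) ≤ walkPos z s (k+1) - walkPos z s k := by
    rw [h]
    by_cases hkn : k < n
    · have : ∑ i : Fin n, (if (i:ℕ) = k then (if s i then (1:ℤ) else -1) else 0)
          = (if s ⟨k, hkn⟩ then (1:ℤ) else -1) := by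
        rw [Finset.sum_eq_single ⟨k, hkn⟩]
        · simp
        · intro i _ hi
          rw [if_neg (by simpa using fun hh => hi (Fin.ext hh))]
        · simp
      rw [this]; split <;> norm_num
    · have : ∑ i : Fin n, (if (i:ℕ) = k then (if s i then (1:ℤ) else -1) else 0) = 0 := by
        apply Finset.sum_eq_zero; intro i _
        rw [if_neg (by omega)]
      rw [this]; norm_num
  omega

lemma walkPos_ge (z : ℤ) {n : ℕ} (s : Fin n → Bool) (k : ℕ) :
    z - k ≤ walkPos z s k := by
  induction k with
  | zero => simp
  | succ k ih =>
    have h := (walkPos_succ_le z s k).2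
    push_cast
    omega

/-- discrete intermediate value: if the walk starts ≤ c and is ≥ c at time k, it hits c. -/
lemma walkPos_ivt (z : ℤ) {n : ℕ} (s : Fin n → Bool) (c : ℤ) :
    ∀ k, z ≤ c → c ≤ walkPos z s k → ∃ j ≤ k, walkPos z s j = c := by
  intro k
  induction k with
  | zero => intro h1 h2; refine ⟨0, le_rfl, ?_⟩; simp only [walkPos_zero] at h2 ⊢; omega
  | succ k ih =>
    intro h1 h2
    by_cases hc : c ≤ walkPos z s k
    · obtain ⟨j, hj, hje⟩ := ih h1 hc
      exact ⟨j, Nat.le_succ_of_le hj, hje⟩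
    · push_neg at hc
      have := (walkPos_succ_le z s k).1
      refine ⟨k+1, le_refl _, ?_⟩
      omega

lemma stepWeight_cons (p : ℝ) {n : ℕ} (b : Bool) (s : Fin n → Bool) :
    stepWeight p (Fin.cons b s) = (if b then p else 1 - p) * stepWeight p s := by
  rw [stepWeight, Fin.prod_univ_succ]
  simp [stepWeight]

lemma stepWeight_snoc (p : ℝ) {n : ℕ} (b : Bool) (s : Fin n → Bool) :
    stepWeight p (Fin.snoc s b) = stepWeight p s * (if b then p else 1 - p) := by
  rw [stepWeight, Fin.prod_univ_castSucc]
  simp [stepWeight, Fin.snoc_castSucc, Fin.snoc_last]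

lemma sum_cons_split {n : ℕ} (F : (Fin (n+1) → Bool) → ℝ) :
    (∑ s : Fin (n+1) → Bool, F s)
      = (∑ s : Fin n → Bool, F (Fin.cons true s))
      + (∑ s : Fin n → Bool, F (Fin.cons false s)) := by
  rw [← Equiv.sum_comp (Fin.consEquiv fun _ => Bool) F, Fintype.sum_prod_type,
    Fintype.sum_bool]
  simp [Fin.consEquiv]

lemma sum_snoc_split {n : ℕ} (F : (Fin (n+1) → Bool) → ℝ) :
    (∑ s : Fin (n+1) → Bool, F s)
      = ∑ s : Fin n → Bool, (F (Fin.snoc s true) + F (Fin.snoc s false)) := by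
  rw [← Equiv.sum_comp (Fin.snocEquiv fun _ => Bool) F, Fintype.sum_prod_type,
    Fintype.sum_bool, ← Finset.sum_add_distrib]
  simp [Fin.snocEquiv]

lemma sum_stepWeight (p : ℝ) : ∀ n, (∑ s : Fin n → Bool, stepWeight p s) = 1 := by
  intro n
  induction n with
  | zero =>
    have h : ∀ s : Fin 0 → Bool, stepWeight p s = 1 := fun s => by
      simp [stepWeight]
    rw [Finset.sum_congr rfl fun s _ => h s, Finset.sum_const, Finset.card_univ]
    simp
  | succ n ih =>
    rw [sum_cons_split (fun s => stepWeight p s)]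
    simp only [stepWeight_cons, reduceIte, Bool.false_eq_true, if_false]
    rw [← Finset.mul_sum, ← Finset.mul_sum, ih]
    ring

lemma walkPos_snoc (z : ℤ) {n : ℕ} (b : Bool) (s : Fin n → Bool) {k : ℕ} (hk : k ≤ n) :
    walkPos z (Fin.snoc s b) k = walkPos z s k := by
  rw [walkPos_castSucc z (Fin.snoc s b) hk]
  congr 1
  funext i
  simp [Fin.snoc_castSucc]

noncomputable def genProb (p : ℝ) (t : ℤ) (A : Set ℤ) (z : ℤ) (n : ℕ) : ℝ :=
  ∑ s : Fin n → Bool,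
    if (∃ k ≤ n, walkPos z s k = t ∧ ∀ j < k, walkPos z s j ∉ A) then stepWeight p s else 0

lemma stepWeight_nonneg {p : ℝ} (hp0 : 0 ≤ p) (hp1 : p ≤ 1) {n : ℕ} (s : Fin n → Bool) :
    0 ≤ stepWeight p s := by
  apply Finset.prod_nonneg
  intro i _
  split_ifs <;> linarith

lemma genProb_nonneg {p : ℝ} (hp0 : 0 ≤ p) (hp1 : p ≤ 1) (t : ℤ) (A : Set ℤ) (z : ℤ) (n : ℕ) :
    0 ≤ genProb p t A z n := by
  apply Finset.sum_nonneg
  intro s _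
  split_ifs
  · exact stepWeight_nonneg hp0 hp1 s
  · exact le_refl 0

lemma genProb_le_one {p : ℝ} (hp0 : 0 ≤ p) (hp1 : p ≤ 1) (t : ℤ) (A : Set ℤ) (z : ℤ) (n : ℕ) :
    genProb p t A z n ≤ 1 := by
  rw [← sum_stepWeight p n]
  apply Finset.sum_le_sum
  intro s _
  split_ifs
  · exact le_refl _
  · exact stepWeight_nonneg hp0 hp1 s

lemma genProb_target (p : ℝ) (t : ℤ) (A : Set ℤ) (n : ℕ) :
    genProb p t A t n = 1 := by
  rw [genProb, ← sum_stepWeight p n]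
  refine Finset.sum_congr rfl fun s _ => ?_
  rw [if_pos ⟨0, Nat.zero_le n, walkPos_zero t s, fun j hj => absurd hj (Nat.not_lt_zero j)⟩]

lemma genProb_absorbed (p : ℝ) {t : ℤ} {A : Set ℤ} {z : ℤ} (hzA : z ∈ A) (hzt : z ≠ t) (n : ℕ) :
    genProb p t A z n = 0 := by
  rw [genProb]
  refine Finset.sum_eq_zero fun s _ => ?_
  rw [if_neg]
  rintro ⟨k, hk, hkt, hbef⟩
  rcases Nat.eq_zero_or_pos k with rfl | hk0
  · exact hzt (by simpa using hkt)
  · exact hbef 0 hk0 (by simpa using hzA)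

lemma genProb_succ (p : ℝ) {t : ℤ} {A : Set ℤ} {z : ℤ} (hzt : z ≠ t) (hzA : z ∉ A) (n : ℕ) :
    genProb p t A z (n+1) = p * genProb p t A (z+1) n + (1-p) * genProb p t A (z-1) n := by
  have key : ∀ (b : Bool) (s : Fin n → Bool),
      ((∃ k ≤ n+1, walkPos z (Fin.cons b s) k = t ∧ ∀ j < k, walkPos z (Fin.cons b s) j ∉ A)
      ↔ (∃ k ≤ n, walkPos (z + if b then 1 else -1) s k = t ∧
          ∀ j < k, walkPos (z + if b then 1 else -1) s j ∉ A)) := by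
    intro b s
    constructor
    · rintro ⟨k, hk, hkt, hbef⟩
      match k with
      | 0 => exact absurd (by simpa using hkt) hzt
      | k+1 =>
        refine ⟨k, by omega, ?_, ?_⟩
        · rw [← walkPos_cons]; exact hkt
        · intro j hj
          rw [← walkPos_cons]
          exact hbef (j+1) (by omega)
    · rintro ⟨k, hk, hkt, hbef⟩
      refine ⟨k+1, by omega, ?_, ?_⟩
      · rw [walkPos_cons]; exact hkt
      · intro j hj
        match j with
        | 0 => simpa using hzA
        | j+1 =>
          rw [walkPos_cons]
          exact hbef j (by omega)
  rw [genProb, sum_cons_split, genProb, genProb, Finset.mul_sum, Finset.mul_sum]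
  congr 1
  · refine Finset.sum_congr rfl fun s _ => ?_
    rw [stepWeight_cons, if_congr (key true s) rfl rfl]
    simp only [reduceIte]
    split_ifs <;> ring
  · refine Finset.sum_congr rfl fun s _ => ?_
    rw [stepWeight_cons, if_congr (key false s) rfl rfl]
    simp only [Bool.false_eq_true, if_false, show z + (-1:ℤ) = z - 1 from by ring]
    split_ifs <;> ring

lemma genProb_mono {p : ℝ} (hp0 : 0 ≤ p) (hp1 : p ≤ 1) (t : ℤ) (A : Set ℤ) (z : ℤ) :
    Monotone (genProb p t A z) := by
  apply monotone_nat_of_le_succ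
  intro n
  conv_rhs => rw [genProb, sum_snoc_split]
  rw [genProb]
  apply Finset.sum_le_sum
  intro s _
  have hsn : ∀ b : Bool,
      (∃ k ≤ n, walkPos z s k = t ∧ ∀ j < k, walkPos z s j ∉ A) →
      (∃ k ≤ n+1, walkPos z (Fin.snoc s b) k = t ∧ ∀ j < k, walkPos z (Fin.snoc s b) j ∉ A) := by
    rintro b ⟨k, hk, hkt, hbef⟩
    refine ⟨k, by omega, ?_, fun j hj => ?_⟩
    · rw [walkPos_snoc z b s hk]; exact hkt
    · rw [walkPos_snoc z b s (by omega : j ≤ n)]; exact hbef j hj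
  by_cases hE : ∃ k ≤ n, walkPos z s k = t ∧ ∀ j < k, walkPos z s j ∉ A
  · rw [if_pos hE, if_pos (hsn true hE), if_pos (hsn false hE),
      stepWeight_snoc, stepWeight_snoc]
    simp only [reduceIte, Bool.false_eq_true, if_false]
    nlinarith [stepWeight_nonneg hp0 hp1 s]
  · rw [if_neg hE]
    have h1 : (0:ℝ) ≤ (if (∃ k ≤ n+1, walkPos z (Fin.snoc s true) k = t ∧
        ∀ j < k, walkPos z (Fin.snoc s true) j ∉ A) then stepWeight p (Fin.snoc s true) else 0) := by
      split_ifs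
      · exact stepWeight_nonneg hp0 hp1 _
      · exact le_refl 0
    have h2 : (0:ℝ) ≤ (if (∃ k ≤ n+1, walkPos z (Fin.snoc s false) k = t ∧
        ∀ j < k, walkPos z (Fin.snoc s false) j ∉ A) then stepWeight p (Fin.snoc s false) else 0) := by
      split_ifs
      · exact stepWeight_nonneg hp0 hp1 _
      · exact le_refl 0
    exact add_nonneg h1 h2

noncomputable def gLim (p : ℝ) (t : ℤ) (A : Set ℤ) (z : ℤ) : ℝ := ⨆ n, genProb p t A z n

lemma genProb_tendsto {p : ℝ} (hp0 : 0 ≤ p) (hp1 : p ≤ 1) (t : ℤ) (A : Set ℤ) (z : ℤ) :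
    Tendsto (fun n => genProb p t A z n) atTop (𝓝 (gLim p t A z)) := by
  apply tendsto_atTop_ciSup (genProb_mono hp0 hp1 t A z)
  exact ⟨1, by rintro y ⟨n, rfl⟩; exact genProb_le_one hp0 hp1 t A z n⟩

lemma genProb_le_gLim {p : ℝ} (hp0 : 0 ≤ p) (hp1 : p ≤ 1) (t : ℤ) (A : Set ℤ) (z : ℤ) (n : ℕ) :
    genProb p t A z n ≤ gLim p t A z :=
  le_ciSup ⟨1, by rintro y ⟨m, rfl⟩; exact genProb_le_one hp0 hp1 t A z m⟩ n

lemma gLim_target {p : ℝ} (t : ℤ) (A : Set ℤ) : gLim p t A t = 1 := by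
  rw [gLim]
  have : ∀ n, genProb p t A t n = 1 := genProb_target p t A
  simp [this]

lemma gLim_absorbed {p : ℝ} {t : ℤ} {A : Set ℤ} {z : ℤ}
    (hzA : z ∈ A) (hzt : z ≠ t) : gLim p t A z = 0 := by
  rw [gLim]
  have : ∀ n, genProb p t A z n = 0 := genProb_absorbed p hzA hzt
  simp [this]

lemma gLim_harmonic {p : ℝ} (hp0 : 0 ≤ p) (hp1 : p ≤ 1) {t : ℤ} {A : Set ℤ} {z : ℤ}
    (hzt : z ≠ t) (hzA : z ∉ A) :
    gLim p t A z = p * gLim p t A (z+1) + (1-p) * gLim p t A (z-1) := by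
  have h1 : Tendsto (fun n => genProb p t A z (n+1)) atTop (𝓝 (gLim p t A z)) :=
    (tendsto_add_atTop_iff_nat 1).2 (genProb_tendsto hp0 hp1 t A z)
  have h2 : Tendsto (fun n => p * genProb p t A (z+1) n + (1-p) * genProb p t A (z-1) n) atTop
      (𝓝 (p * gLim p t A (z+1) + (1-p) * gLim p t A (z-1))) :=
    ((genProb_tendsto hp0 hp1 t A (z+1)).const_mul p).add
      ((genProb_tendsto hp0 hp1 t A (z-1)).const_mul (1-p))
  have heq : (fun n => genProb p t A z (n+1))
      = fun n => p * genProb p t A (z+1) n + (1-p) * genProb p t A (z-1) n := by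
    funext n; exact genProb_succ p hzt hzA n
  rw [heq] at h1
  exact tendsto_nhds_unique h1 h2

/-- solving the one-dimensional harmonic recursion. -/
lemma solve_harmonic {p r : ℝ} (hp0 : p ≠ 0) (hpr : p * r = 1 - p)
    (G : ℕ → ℝ) (M : ℕ)
    (hG : ∀ m, 1 ≤ m → m < M → G m = p * G (m+1) + (1-p) * G (m-1)) :
    ∀ m ≤ M, G m = G 0 + (G 1 - G 0) * ∑ i ∈ Finset.range m, r ^ i := by
  have key : ∀ m, m + 2 ≤ M →
      (G m = G 0 + (G 1 - G 0) * ∑ i ∈ Finset.range m, r ^ i) →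
      (G (m+1) = G 0 + (G 1 - G 0) * ∑ i ∈ Finset.range (m+1), r ^ i) →
      G (m+2) = G 0 + (G 1 - G 0) * ∑ i ∈ Finset.range (m+2), r ^ i := by
    intro m hm h0 h1
    have hrec := hG (m+1) (by omega) (by omega)
    simp only [Nat.add_sub_cancel] at hrec
    have hq : (1:ℝ) - p = p * r := hpr.symm
    have hpow : p * r ^ (m+1) = (p * r) * r ^ m := by ring
    have : p * G (m+2) = G (m+1) - (1-p) * G m := by linarith
    have hgoal : p * G (m+2) = p * (G 0 + (G 1 - G 0) * ∑ i ∈ Finset.range (m+2), r ^ i) := by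
      rw [this, h0, h1, Finset.sum_range_succ, Finset.sum_range_succ, Finset.sum_range_succ, hq]
      linear_combination (-(G 0 + (G 1 - G 0) * (∑ i ∈ Finset.range m, r ^ i)
        + (G 1 - G 0) * r ^ m)) * hpr
    exact mul_left_cancel₀ hp0 hgoal
  intro m
  induction m using Nat.strong_induction_on with
  | _ m ih =>
    intro hm
    match m with
    | 0 => simp
    | 1 => simp
    | (m+2) =>
      exact key m hm (ih m (by omega) (by omega)) (ih (m+1) (by omega) (by omega))

lemma pow_ne_one_of_pos {r : ℝ} (hr0 : 0 < r) (hr1 : r ≠ 1) {n : ℕ} (hn : 1 ≤ n) :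
    r ^ n ≠ 1 := by
  rcases lt_or_gt_of_ne hr1 with h | h
  · exact ne_of_lt (pow_lt_one₀ hr0.le h (by omega))
  · exact ne_of_gt (one_lt_pow₀ h (by omega))

lemma geom_S_pos {r : ℝ} (hr0 : 0 < r) {M : ℕ} (hM : 1 ≤ M) :
    0 < ∑ i ∈ Finset.range M, r ^ i := by
  apply Finset.sum_pos
  · intro i _; positivity
  · exact Finset.nonempty_range_iff.mpr (by omega)

lemma gLim_interval {p : ℝ} (hp0 : 0 < p) (hp1 : p < 1) {a b t : ℤ} {M : ℕ}
    (hM : b = a + M) (hab : a < b) (ht : t = a ∨ t = b) :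
    ∀ m ≤ M, gLim p t {a, b} (a + m) = gLim p t {a, b} a
      + (gLim p t {a, b} (a + 1) - gLim p t {a, b} a)
        * ∑ i ∈ Finset.range m, ((1-p)/p) ^ i := by
  have hpr : p * ((1-p)/p) = 1 - p := by field_simp
  have hsolve := solve_harmonic (ne_of_gt hp0) hpr
      (fun m : ℕ => gLim p t {a, b} (a + (m:ℤ))) M ?_
  · intro m hm
    have h0 := hsolve m hm
    simp only [Nat.cast_zero, add_zero, Nat.cast_one] at h0
    exact h0
  · intro m h1 h2
    have hz1 : (a + (m:ℤ)) ≠ t := by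
      rcases ht with rfl | rfl <;> omega
    have hz2 : (a + (m:ℤ)) ∉ ({a, b} : Set ℤ) := by
      simp only [Set.mem_insert_iff, Set.mem_singleton_iff]
      push_neg
      omega
    have h := gLim_harmonic hp0.le hp1.le hz1 hz2
    have e1 : a + (m:ℤ) + 1 = a + ((m+1 : ℕ) : ℤ) := by push_cast; ring
    have e2 : a + (m:ℤ) - 1 = a + ((m-1 : ℕ) : ℤ) := by
      have : ((m-1 : ℕ) : ℤ) = (m:ℤ) - 1 := by
        rw [Nat.cast_sub h1]; simp
      rw [this]; ring
    rw [e1, e2] at h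
    exact h

/-- hitting the upper barrier `b` before `a` -/
lemma gLim_up {p : ℝ} (hp0 : 0 < p) (hp1 : p < 1) {a b : ℤ} {M : ℕ}
    (hM : b = a + M) (hM1 : 1 ≤ M) :
    ∀ m ≤ M, gLim p b {a, b} (a + m)
      = (∑ i ∈ Finset.range m, ((1-p)/p) ^ i) / (∑ i ∈ Finset.range M, ((1-p)/p) ^ i) := by
  have hab : a < b := by omega
  have hint := gLim_interval hp0 hp1 hM hab (Or.inr rfl)
  have hA : gLim p b {a, b} a = 0 :=
    gLim_absorbed (by simp) (by omega)
  have hBval : gLim p b {a, b} (a + (M:ℤ)) = 1 := by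
    rw [← hM]; exact gLim_target b {a, b}
  have hSpos : 0 < ∑ i ∈ Finset.range M, ((1-p)/p) ^ i := geom_S_pos (div_pos (by linarith) hp0) hM1
  have hB := hint M (le_refl M)
  rw [hA, hBval, zero_add, sub_zero] at hB
  -- 1 = G1 * S M
  intro m hm
  have h := hint m hm
  rw [hA, zero_add, sub_zero] at h
  rw [h, eq_div_iff (ne_of_gt hSpos)]
  linear_combination (-(∑ i ∈ Finset.range m, ((1-p)/p) ^ i)) * hB

/-- hitting the lower barrier `a` before `b` -/
lemma gLim_down {p : ℝ} (hp0 : 0 < p) (hp1 : p < 1) {a b : ℤ} {M : ℕ}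
    (hM : b = a + M) (hM1 : 1 ≤ M) :
    ∀ m ≤ M, gLim p a {a, b} (a + m)
      = 1 - (∑ i ∈ Finset.range m, ((1-p)/p) ^ i) / (∑ i ∈ Finset.range M, ((1-p)/p) ^ i) := by
  have hab : a < b := by omega
  have hint := gLim_interval hp0 hp1 hM hab (Or.inl rfl)
  have hA : gLim p a {a, b} a = 1 := gLim_target a {a, b}
  have hBval : gLim p a {a, b} (a + (M:ℤ)) = 0 := by
    rw [← hM]
    exact gLim_absorbed (by simp) (by omega)
  have hSpos : 0 < ∑ i ∈ Finset.range M, ((1-p)/p) ^ i := geom_S_pos (div_pos (by linarith) hp0) hM1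
  have hB := hint M (le_refl M)
  rw [hA, hBval] at hB
  have hc : (gLim p a {a, b} (a+1) - 1) * (∑ i ∈ Finset.range M, ((1-p)/p) ^ i) = -1 := by
    linarith
  intro m hm
  have h := hint m hm
  rw [hA] at h
  rw [h]
  have hd : (∑ i ∈ Finset.range m, ((1-p)/p) ^ i) / (∑ i ∈ Finset.range M, ((1-p)/p) ^ i)
      = -((gLim p a {a, b} (a+1) - 1) * ∑ i ∈ Finset.range m, ((1-p)/p) ^ i) := by
    rw [div_eq_iff (ne_of_gt hSpos)]
    linear_combination (∑ i ∈ Finset.range m, ((1-p)/p) ^ i) * hc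
  rw [hd]
  ring

lemma tendsto_ratio {r : ℝ} (hr0 : 0 < r) (hr1 : r ≠ 1) :
    Tendsto (fun M : ℕ => (∑ i ∈ Finset.range M, r ^ i) / (∑ i ∈ Finset.range (M+1), r ^ i))
      atTop (𝓝 (min 1 r⁻¹)) := by
  have hrne : r ≠ 0 := ne_of_gt hr0
  have hr1' : r - 1 ≠ 0 := sub_ne_zero.mpr hr1
  have hden : ∀ M : ℕ, r ^ (M+1) - 1 ≠ 0 := fun M =>
    sub_ne_zero.mpr (pow_ne_one_of_pos hr0 hr1 (by omega))
  have heq : ∀ M : ℕ, (∑ i ∈ Finset.range M, r ^ i) / (∑ i ∈ Finset.range (M+1), r ^ i)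
      = (r ^ M - 1) / (r ^ (M+1) - 1) := by
    intro M
    rw [geom_sum_eq hr1, geom_sum_eq hr1]
    rw [div_div_div_cancel_right₀]
    exact hr1'
  rcases lt_or_gt_of_ne hr1 with h | h
  · -- r < 1 : limit 1
    have hmin : min 1 r⁻¹ = 1 := min_eq_left (le_of_lt ((one_lt_inv₀ hr0).2 h))
    rw [hmin]
    have h1 : Tendsto (fun M : ℕ => r ^ M) atTop (𝓝 0) :=
      tendsto_pow_atTop_nhds_zero_of_lt_one hr0.le h
    have h2 : Tendsto (fun M : ℕ => r ^ (M+1)) atTop (𝓝 0) :=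
      (tendsto_add_atTop_iff_nat 1).2 h1
    have h3 := (h1.sub_const 1).div (h2.sub_const 1) (by norm_num)
    have h4 : ((0:ℝ) - 1) / (0 - 1) = 1 := by norm_num
    rw [h4] at h3
    exact h3.congr fun M => (heq M).symm
  · -- r > 1 : limit r⁻¹
    have hmin : min 1 r⁻¹ = r⁻¹ := min_eq_right (le_of_lt (inv_lt_one_of_one_lt₀ h))
    rw [hmin]
    have hs0 : (0:ℝ) ≤ r⁻¹ := inv_nonneg.mpr hr0.le
    have hs1 : r⁻¹ < 1 := inv_lt_one_of_one_lt₀ h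
    have heq2 : ∀ M : ℕ, (r ^ M - 1) / (r ^ (M+1) - 1)
        = (1 - (r⁻¹) ^ M) / (r - (r⁻¹) ^ M) := by
      intro M
      have hrM : r ^ M ≠ 0 := pow_ne_zero M hrne
      have hsM : (r⁻¹) ^ M ≤ 1 := pow_le_one₀ hs0 hs1.le
      have hden2 : r - (r⁻¹) ^ M ≠ 0 := ne_of_gt (by linarith)
      rw [div_eq_div_iff (hden M) hden2]
      have hu : r ^ M * r⁻¹ ^ M = 1 := by
        rw [← mul_pow, mul_inv_cancel₀ hrne, one_pow]
      linear_combination (r - 1) * hu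
    have h1 : Tendsto (fun M : ℕ => (r⁻¹) ^ M) atTop (𝓝 0) :=
      tendsto_pow_atTop_nhds_zero_of_lt_one hs0 hs1
    have h3 := ((tendsto_const_nhds (x := (1:ℝ))).sub h1).div
      ((tendsto_const_nhds (x := r)).sub h1) (by simpa using hrne)
    have h4 : ((1:ℝ) - 0) / (r - 0) = r⁻¹ := by rw [sub_zero, sub_zero, one_div]
    rw [h4] at h3
    exact h3.congr fun M => ((heq M).trans (heq2 M)).symm

section pone

variable {p : ℝ}

lemma genProb_subset_le {t : ℤ} {A B : Set ℤ} (hp0 : 0 ≤ p) (hp1 : p ≤ 1)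
    (hAB : A ⊆ B) (z : ℤ) (n : ℕ) :
    genProb p t B z n ≤ genProb p t A z n := by
  rw [genProb, genProb]
  apply Finset.sum_le_sum
  intro s _
  split_ifs with h1 h2 h2
  · exact le_refl _
  · exfalso
    obtain ⟨k, hk, hkt, hbef⟩ := h1
    exact h2 ⟨k, hk, hkt, fun j hj hjA => hbef j hj (hAB hjA)⟩
  · exact stepWeight_nonneg hp0 hp1 s
  · exact le_refl _

lemma pone_eq_barrier (p : ℝ) (n : ℕ) :
    genProb p 0 ({0} : Set ℤ) (-1) n = genProb p 0 ({-((n:ℤ)+1), 0} : Set ℤ) (-1) n := by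
  rw [genProb, genProb]
  refine Finset.sum_congr rfl fun s _ => ?_
  have hfwd : (∃ k ≤ n, walkPos (-1) s k = 0 ∧ ∀ j < k, walkPos (-1) s j ∉ ({0} : Set ℤ)) →
      (∃ k ≤ n, walkPos (-1) s k = 0 ∧
        ∀ j < k, walkPos (-1) s j ∉ ({-((n:ℤ)+1), 0} : Set ℤ)) := by
    rintro ⟨k, hk, hkt, hbef⟩
    refine ⟨k, hk, hkt, fun j hj => ?_⟩
    have hge := walkPos_ge (-1) s j
    have hne0 : walkPos (-1) s j ≠ 0 := by simpa using hbef j hj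
    simp only [Set.mem_insert_iff, Set.mem_singleton_iff]
    push_neg
    exact ⟨by omega, hne0⟩
  have hbwd : (∃ k ≤ n, walkPos (-1) s k = 0 ∧
        ∀ j < k, walkPos (-1) s j ∉ ({-((n:ℤ)+1), 0} : Set ℤ)) →
      (∃ k ≤ n, walkPos (-1) s k = 0 ∧ ∀ j < k, walkPos (-1) s j ∉ ({0} : Set ℤ)) := by
    rintro ⟨k, hk, hkt, hbef⟩
    refine ⟨k, hk, hkt, fun j hj => ?_⟩
    have := hbef j hj
    simp only [Set.mem_insert_iff, Set.mem_singleton_iff] at this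
    push_neg at this
    simpa using this.2
  by_cases h : ∃ k ≤ n, walkPos (-1) s k = 0 ∧ ∀ j < k, walkPos (-1) s j ∉ ({0} : Set ℤ)
  · rw [if_pos h, if_pos (hfwd h)]
  · rw [if_neg h, if_neg fun h2 => h (hbwd h2)]

lemma pone_tendsto (hp0 : 0 < p) (hp1 : p < 1) (hne : p ≠ 1 - p) :
    Tendsto (fun n => genProb p 0 ({0} : Set ℤ) (-1) n) atTop
      (𝓝 (min 1 (((1-p)/p)⁻¹))) := by
  set r := (1-p)/p with hr
  have hr0 : 0 < r := div_pos (by linarith) hp0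
  have hr1 : r ≠ 1 := by
    rw [hr]
    intro h
    have := (div_eq_iff (ne_of_gt hp0)).1 h
    exact hne (by linarith)
  set S : ℕ → ℝ := fun m => ∑ i ∈ Finset.range m, r ^ i with hS
  have htend := genProb_tendsto hp0.le hp1.le 0 ({0} : Set ℤ) (-1)
  set u := gLim p 0 ({0} : Set ℤ) (-1) with hu
  -- upper bound : Pone n ≤ S n / S (n+1)
  have hup : ∀ n, genProb p 0 ({0} : Set ℤ) (-1) n ≤ S n / S (n+1) := by
    intro n
    rw [pone_eq_barrier p n]
    have hM : (0:ℤ) = -((n:ℤ)+1) + ((n+1 : ℕ) : ℤ) := by push_cast; ring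
    have hval := gLim_up hp0 hp1 hM (by omega) n (by omega)
    have hz : -((n:ℤ)+1) + (n:ℤ) = -1 := by ring
    rw [hz] at hval
    calc genProb p 0 ({-((n:ℤ)+1), 0} : Set ℤ) (-1) n
        ≤ gLim p 0 ({-((n:ℤ)+1), 0} : Set ℤ) (-1) :=
          genProb_le_gLim hp0.le hp1.le _ _ _ n
      _ = S n / S (n+1) := hval
  -- lower bound : S m / S (m+1) ≤ u
  have hlow : ∀ m : ℕ, S m / S (m+1) ≤ u := by
    intro m
    have hM : (0:ℤ) = -(((m+1):ℕ):ℤ) + ((m+1 : ℕ) : ℤ) := by push_cast; ring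
    have hval := gLim_up hp0 hp1 hM (by omega) m (by omega)
    have hz : -(((m+1):ℕ):ℤ) + (m:ℤ) = -1 := by push_cast; ring
    rw [hz] at hval
    rw [← hval]
    apply ciSup_le
    intro n
    calc genProb p 0 ({-(((m+1):ℕ):ℤ), 0} : Set ℤ) (-1) n
        ≤ genProb p 0 ({0} : Set ℤ) (-1) n := by
          apply genProb_subset_le hp0.le hp1.le _ _ n
          intro y hy
          simp only [Set.mem_singleton_iff] at hy
          simp [hy]
      _ ≤ u := genProb_le_gLim hp0.le hp1.le _ _ _ n
  have hratio := tendsto_ratio hr0 hr1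
  have hu_le : u ≤ min 1 r⁻¹ :=
    le_of_tendsto_of_tendsto htend hratio (Filter.Eventually.of_forall hup)
  have hle_u : min 1 r⁻¹ ≤ u :=
    le_of_tendsto hratio (Filter.Eventually.of_forall hlow)
  have : u = min 1 r⁻¹ := le_antisymm hu_le hle_u
  rw [← this]
  exact htend

end pone

lemma ite_irrel {c : Prop} (h1 h2 : Decidable c) (a b : ℝ) :
    @ite ℝ c h1 a b = @ite ℝ c h2 a b := by
  cases Subsingleton.elim h1 h2; rfl

lemma walkPos_cons_true {n : ℕ} (s : Fin n → Bool) (k : ℕ) :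
    walkPos 0 (Fin.cons true s) (k+1) = walkPos 1 s k := by
  rw [walkPos_cons]; norm_num

lemma walkPos_cons_false {n : ℕ} (s : Fin n → Bool) (k : ℕ) :
    walkPos 0 (Fin.cons false s) (k+1) = walkPos (-1) s k := by
  rw [walkPos_cons]; norm_num

lemma first_hit {z t : ℤ} {n : ℕ} {s : Fin n → Bool}
    (h : ∃ k ≤ n, walkPos z s k = t ∧ ∀ j < k, walkPos z s j ≠ 0) :
    ∃ k ≤ n, walkPos z s k = t ∧ ∀ j < k, walkPos z s j ∉ ({0, t} : Set ℤ) := by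
  obtain ⟨k, hk, hkt, hbef⟩ := h
  have hex : ∃ m, m ≤ n ∧ walkPos z s m = t := ⟨k, hk, hkt⟩
  have hk0 := Nat.find_spec hex
  have hk0le : Nat.find hex ≤ k := Nat.find_min' hex ⟨hk, hkt⟩
  refine ⟨Nat.find hex, hk0.1, hk0.2, fun j hj => ?_⟩
  simp only [Set.mem_insert_iff, Set.mem_singleton_iff]
  push_neg
  refine ⟨hbef j (by omega), fun hjt => ?_⟩
  exact Nat.find_min hex hj ⟨by omega, hjt⟩

lemma exceed_decomp (p : ℝ) (x : ℕ) (n : ℕ) :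
    excursionExceedProb p x (n+1)
      = p * genProb p ((x:ℤ)+1) ({0, (x:ℤ)+1} : Set ℤ) 1 n := by
  rw [excursionExceedProb, sum_cons_split, genProb, Finset.mul_sum]
  have hfalse : ∀ s : Fin n → Bool,
      (if (∃ k ≤ n+1, 0 < k ∧ walkPos 0 (Fin.cons false s) k = (x:ℤ)+1 ∧
          ∀ j, 0 < j → j < k → walkPos 0 (Fin.cons false s) j ≠ 0) then
        stepWeight p (Fin.cons false s) else 0) = 0 := by
    intro s
    rw [if_neg]
    rintro ⟨k, hk, hk0, hkt, hbef⟩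
    match k, hk0 with
    | (k+1), _ =>
      rw [walkPos_cons_false] at hkt
      have hzero : ∃ j ≤ k, walkPos (-1 : ℤ) s j = 0 := by
        apply walkPos_ivt (-1) s 0 k (by norm_num)
        rw [hkt]; positivity
      obtain ⟨j, hj, hj0⟩ := hzero
      have hjk : j < k := by
        rcases Nat.lt_or_ge j k with h | h
        · exact h
        · exfalso
          have : j = k := by omega
          rw [this, hkt] at hj0
          omega
      have hb := hbef (j+1) (by omega) (by omega)
      rw [walkPos_cons_false] at hb
      exact hb hj0
  have htrue : ∀ s : Fin n → Bool,
      (if (∃ k ≤ n+1, 0 < k ∧ walkPos 0 (Fin.cons true s) k = (x:ℤ)+1 ∧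
          ∀ j, 0 < j → j < k → walkPos 0 (Fin.cons true s) j ≠ 0) then
        stepWeight p (Fin.cons true s) else 0)
      = p * (if (∃ k ≤ n, walkPos 1 s k = (x:ℤ)+1 ∧
          ∀ j < k, walkPos 1 s j ∉ ({0, (x:ℤ)+1} : Set ℤ)) then stepWeight p s else 0) := by
    intro s
    have hiff : (∃ k ≤ n+1, 0 < k ∧ walkPos 0 (Fin.cons true s) k = (x:ℤ)+1 ∧
          ∀ j, 0 < j → j < k → walkPos 0 (Fin.cons true s) j ≠ 0)
        ↔ (∃ k ≤ n, walkPos 1 s k = (x:ℤ)+1 ∧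
          ∀ j < k, walkPos 1 s j ∉ ({0, (x:ℤ)+1} : Set ℤ)) := by
      constructor
      · rintro ⟨k, hk, hk0, hkt, hbef⟩
        match k, hk0 with
        | (k+1), _ =>
          rw [walkPos_cons_true] at hkt
          apply first_hit
          refine ⟨k, by omega, hkt, fun j hj => ?_⟩
          have hb := hbef (j+1) (by omega) (by omega)
          rw [walkPos_cons_true] at hb
          exact hb
      · rintro ⟨k, hk, hkt, hbef⟩
        refine ⟨k+1, by omega, by omega, ?_, ?_⟩
        · rw [walkPos_cons_true]; exact hkt
        · intro j hj0 hjk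
          match j, hj0 with
          | (j+1), _ =>
            rw [walkPos_cons_true]
            have := hbef j (by omega)
            simp only [Set.mem_insert_iff, Set.mem_singleton_iff] at this
            push_neg at this
            exact this.1
    by_cases h : ∃ k ≤ n, walkPos 1 s k = (x:ℤ)+1 ∧
        ∀ j < k, walkPos 1 s j ∉ ({0, (x:ℤ)+1} : Set ℤ)
    · rw [if_pos h, if_pos (hiff.2 h), stepWeight_cons]
      norm_num
    · rw [if_neg h, if_neg (fun h2 => h (hiff.1 h2)), mul_zero]
  rw [Finset.sum_congr rfl fun s _ => htrue s, Finset.sum_congr rfl fun s _ => hfalse s]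
  simp

lemma return_decomp (p : ℝ) (x : ℕ) (hx : 0 < x) (n : ℕ) :
    excursionReturnBelowProb p x (n+1)
      = p * genProb p 0 ({0, (x:ℤ)+1} : Set ℤ) 1 n
        + (1-p) * genProb p 0 ({0} : Set ℤ) (-1) n := by
  rw [excursionReturnBelowProb, sum_cons_split, genProb, genProb, Finset.mul_sum,
    Finset.mul_sum]
  have htrue : ∀ s : Fin n → Bool,
      (if (∃ k ≤ n+1, 0 < k ∧ walkPos 0 (Fin.cons true s) k = 0 ∧
          (∀ j, 0 < j → j < k → walkPos 0 (Fin.cons true s) j ≠ 0) ∧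
          (∀ j ≤ k, walkPos 0 (Fin.cons true s) j ≤ (x:ℤ))) then
        stepWeight p (Fin.cons true s) else 0)
      = p * (if (∃ k ≤ n, walkPos 1 s k = 0 ∧
          ∀ j < k, walkPos 1 s j ∉ ({0, (x:ℤ)+1} : Set ℤ)) then stepWeight p s else 0) := by
    intro s
    have hiff : (∃ k ≤ n+1, 0 < k ∧ walkPos 0 (Fin.cons true s) k = 0 ∧
          (∀ j, 0 < j → j < k → walkPos 0 (Fin.cons true s) j ≠ 0) ∧
          (∀ j ≤ k, walkPos 0 (Fin.cons true s) j ≤ (x:ℤ)))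
        ↔ (∃ k ≤ n, walkPos 1 s k = 0 ∧
          ∀ j < k, walkPos 1 s j ∉ ({0, (x:ℤ)+1} : Set ℤ)) := by
      constructor
      · rintro ⟨k, hk, hk0, hkt, hbef, hle⟩
        match k, hk0 with
        | (k+1), _ =>
          rw [walkPos_cons_true] at hkt
          refine ⟨k, by omega, hkt, fun j hj => ?_⟩
          have hb := hbef (j+1) (by omega) (by omega)
          have hl := hle (j+1) (by omega)
          rw [walkPos_cons_true] at hb hl
          simp only [Set.mem_insert_iff, Set.mem_singleton_iff]
          push_neg
          exact ⟨hb, by omega⟩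
      · rintro ⟨k, hk, hkt, hbef⟩
        have hnot : ∀ j < k, walkPos 1 s j ≠ 0 ∧ walkPos 1 s j ≠ (x:ℤ)+1 := by
          intro j hj
          have := hbef j hj
          simp only [Set.mem_insert_iff, Set.mem_singleton_iff] at this
          push_neg at this
          exact this
        have hlex : ∀ j ≤ k, walkPos 1 s j ≤ (x:ℤ) := by
          intro j hj
          rcases Nat.eq_or_lt_of_le hj with rfl | hjk
          · rw [hkt]; positivity
          · by_contra hgt
            push_neg at hgt
            have : (x:ℤ)+1 ≤ walkPos 1 s j := by omega
            obtain ⟨j', hj', hj'e⟩ := walkPos_ivt 1 s ((x:ℤ)+1) j (by omega) this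
            exact (hnot j' (by omega)).2 hj'e
        refine ⟨k+1, by omega, by omega, ?_, ?_, ?_⟩
        · rw [walkPos_cons_true]; exact hkt
        · intro j hj0 hjk
          match j, hj0 with
          | (j+1), _ =>
            rw [walkPos_cons_true]
            exact (hnot j (by omega)).1
        · intro j hj
          match j with
          | 0 => simp
          | (j+1) =>
            rw [walkPos_cons_true]
            exact hlex j (by omega)
    by_cases h : ∃ k ≤ n, walkPos 1 s k = 0 ∧
        ∀ j < k, walkPos 1 s j ∉ ({0, (x:ℤ)+1} : Set ℤ)
    · rw [if_pos h, if_pos (hiff.2 h), stepWeight_cons]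
      norm_num
    · rw [if_neg h, if_neg (fun h2 => h (hiff.1 h2)), mul_zero]
  have hfalse : ∀ s : Fin n → Bool,
      (if (∃ k ≤ n+1, 0 < k ∧ walkPos 0 (Fin.cons false s) k = 0 ∧
          (∀ j, 0 < j → j < k → walkPos 0 (Fin.cons false s) j ≠ 0) ∧
          (∀ j ≤ k, walkPos 0 (Fin.cons false s) j ≤ (x:ℤ))) then
        stepWeight p (Fin.cons false s) else 0)
      = (1-p) * (if (∃ k ≤ n, walkPos (-1) s k = 0 ∧
          ∀ j < k, walkPos (-1) s j ∉ ({0} : Set ℤ)) then stepWeight p s else 0) := by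
    intro s
    have hiff : (∃ k ≤ n+1, 0 < k ∧ walkPos 0 (Fin.cons false s) k = 0 ∧
          (∀ j, 0 < j → j < k → walkPos 0 (Fin.cons false s) j ≠ 0) ∧
          (∀ j ≤ k, walkPos 0 (Fin.cons false s) j ≤ (x:ℤ)))
        ↔ (∃ k ≤ n, walkPos (-1) s k = 0 ∧
          ∀ j < k, walkPos (-1) s j ∉ ({0} : Set ℤ)) := by
      constructor
      · rintro ⟨k, hk, hk0, hkt, hbef, hle⟩
        match k, hk0 with
        | (k+1), _ =>
          rw [walkPos_cons_false] at hkt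
          refine ⟨k, by omega, hkt, fun j hj => ?_⟩
          have hb := hbef (j+1) (by omega) (by omega)
          rw [walkPos_cons_false] at hb
          simpa using hb
      · rintro ⟨k, hk, hkt, hbef⟩
        have hnot : ∀ j < k, walkPos (-1) s j ≠ 0 := by
          intro j hj
          have := hbef j hj
          simpa using this
        have hlex : ∀ j ≤ k, walkPos (-1) s j ≤ (x:ℤ) := by
          intro j hj
          rcases Nat.eq_or_lt_of_le hj with rfl | hjk
          · rw [hkt]; positivity
          · by_contra hgt
            push_neg at hgt
            have hpos : (0:ℤ) ≤ walkPos (-1) s j := by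
              have : (0:ℤ) < (x:ℤ) := by exact_mod_cast hx
              omega
            obtain ⟨j', hj', hj'e⟩ := walkPos_ivt (-1) s 0 j (by norm_num) hpos
            have hj'k : j' < k := by omega
            exact hnot j' hj'k hj'e
        refine ⟨k+1, by omega, by omega, ?_, ?_, ?_⟩
        · rw [walkPos_cons_false]; exact hkt
        · intro j hj0 hjk
          match j, hj0 with
          | (j+1), _ =>
            rw [walkPos_cons_false]
            exact hnot j (by omega)
        · intro j hj
          match j with
          | 0 => simp
          | (j+1) =>
            rw [walkPos_cons_false]
            exact hlex j (by omega)
    by_cases h : ∃ k ≤ n, walkPos (-1) s k = 0 ∧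
        ∀ j < k, walkPos (-1) s j ∉ ({0} : Set ℤ)
    · rw [if_pos h, if_pos (hiff.2 h), stepWeight_cons]
      norm_num
    · rw [if_neg h, if_neg (fun h2 => h (hiff.1 h2)), mul_zero]
  rw [Finset.sum_congr rfl fun s _ => htrue s, Finset.sum_congr rfl fun s _ => hfalse s]
  congr 1
  · exact Finset.sum_congr rfl fun s _ => congrArg (fun y => p * y) (ite_irrel _ _ _ _)
  · exact Finset.sum_congr rfl fun s _ => congrArg (fun y => (1-p) * y) (ite_irrel _ _ _ _)

/-- excursion probabilities for the simple asymmetric walk on ℤ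
(up-probability `p`, down-probability `q = 1 - p`, `p ≠ q`). -/
theorem stmt_5 (p q : ℝ) (x : ℕ) (hp : p ∈ Set.Ioo (0:ℝ) 1) (hq : q = 1 - p)
    (hpq : p ≠ q) (hx : 0 < x) :
    Tendsto (fun n => excursionExceedProb p x n) atTop
      (𝓝 ((q - p) / ((q / p) ^ (x + 1) - 1))) ∧
    Tendsto (fun n => excursionReturnBelowProb p x n) atTop
      (𝓝 (p * ((q / p) ^ (x + 1) - q / p) / ((q / p) ^ (x + 1) - 1) + min p q)) := by
  obtain ⟨hp0, hp1⟩ := hp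
  have hne : p ≠ 1 - p := by rw [hq] at hpq; exact hpq
  set r : ℝ := (1-p)/p with hr
  have hqr : q / p = r := by rw [hq, hr]
  have hr0 : 0 < r := div_pos (by linarith) hp0
  have hr1 : r ≠ 1 := by
    intro h
    rw [hr] at h
    have := (div_eq_iff (ne_of_gt hp0)).1 h
    exact hne (by linarith)
  have hrm1 : r - 1 ≠ 0 := sub_ne_zero.mpr hr1
  have hpow : r ^ (x+1) - 1 ≠ 0 := sub_ne_zero.mpr (pow_ne_one_of_pos hr0 hr1 (by omega))
  have hSgeom : (∑ i ∈ Finset.range (x+1), r ^ i) = (r ^ (x+1) - 1)/(r - 1) :=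
    geom_sum_eq hr1 _
  have hprq : p * r = 1 - p := by rw [hr]; field_simp
  have hMcast : ((x:ℤ)+1) = 0 + ((x+1 : ℕ) : ℤ) := by push_cast; ring
  have h01 : ((0:ℤ) + ((1:ℕ):ℤ)) = 1 := by norm_num
  have hS1 : (∑ i ∈ Finset.range 1, r ^ i) = 1 := by simp
  constructor
  · have hval := gLim_up hp0 hp1 (a := 0) (b := (x:ℤ)+1) (M := x+1) hMcast (by omega) 1 (by omega)
    rw [h01, hS1, hSgeom, one_div_div] at hval
    have htd : Tendsto (fun n => excursionExceedProb p x (n+1)) atTop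
        (𝓝 (p * gLim p ((x:ℤ)+1) ({0, (x:ℤ)+1} : Set ℤ) 1)) :=
      ((genProb_tendsto hp0.le hp1.le ((x:ℤ)+1) ({0, (x:ℤ)+1} : Set ℤ) 1).const_mul p).congr
        fun n => (exceed_decomp p x n).symm
    have hvv : p * gLim p ((x:ℤ)+1) ({0, (x:ℤ)+1} : Set ℤ) 1
        = (q - p) / ((q/p) ^ (x+1) - 1) := by
      rw [hval, hqr, mul_div_assoc']
      congr 1
      rw [hq]
      linear_combination hprq
    rw [hvv] at htd
    exact (tendsto_add_atTop_iff_nat 1).1 htd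
  · have hval := gLim_down hp0 hp1 (a := 0) (b := (x:ℤ)+1) (M := x+1) hMcast (by omega) 1 (by omega)
    rw [h01, hS1, hSgeom, one_div_div] at hval
    have htd : Tendsto (fun n => excursionReturnBelowProb p x (n+1)) atTop
        (𝓝 (p * gLim p 0 ({0, (x:ℤ)+1} : Set ℤ) 1 + (1-p) * (min 1 r⁻¹))) :=
      (((genProb_tendsto hp0.le hp1.le 0 ({0, (x:ℤ)+1} : Set ℤ) 1).const_mul p).add
        ((pone_tendsto hp0 hp1 hne).const_mul (1-p))).congr
        fun n => (return_decomp p x hx n).symm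
    have hq0 : (0:ℝ) < 1 - p := by linarith
    have hrinv : r⁻¹ = p / (1-p) := by rw [hr, inv_div]
    have hmin : (1-p) * min 1 r⁻¹ = min p q := by
      rcases le_total p (1-p) with h | h
      · have hm : min 1 r⁻¹ = r⁻¹ := min_eq_right (by rw [hrinv]; exact (div_le_one hq0).mpr h)
        rw [hm, hrinv, hq, min_eq_left h]
        field_simp
      · have hm : min 1 r⁻¹ = 1 := min_eq_left (by rw [hrinv]; exact (one_le_div hq0).mpr h)
        rw [hm, hq, min_eq_right h]
        ring
    have hvv : p * gLim p 0 ({0, (x:ℤ)+1} : Set ℤ) 1 + (1-p) * min 1 r⁻¹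
        = p * ((q/p)^(x+1) - q/p)/((q/p)^(x+1) - 1) + min p q := by
      rw [hval, hmin, hqr]
      congr 1
      field_simp
      ring
    rw [hvv] at htd
    exact (tendsto_add_atTop_iff_nat 1).1 htd
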